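/- Let R be the ring of integers of a number field K. A nonzero fractional ideal 𝔞 of K cannot be written as a finite union 𝔞 = 𝔞₁ ∪ ⋯ ∪ 𝔞ₙ of fractional ideals 𝔞ᵢ unless 𝔞 = 𝔞ᵢ for some i. -/

import Mathlib

open FractionalIdeal

theorem statement1 (K : Type*) [Field K] [NumberField K]
    (𝔞 : FractionalIdeal (nonZeroDivisors (NumberField.RingOfIntegers K)) K) (h𝔞 : 𝔞 ≠ 0)
    (n : ℕ) (𝔟 : Fin n → FractionalIdeal (nonZeroDivisors (NumberField.RingOfIntegers K)) K)
    (h : (𝔞 : Set K) = ⋃ i, (𝔟 i : Set K)) :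
    ∃ i, 𝔞 = 𝔟 i := by
  classical
  set R := NumberField.RingOfIntegers K
  by_contra hc
  push_neg at hc
  have hle : ∀ i, 𝔟 i ≤ 𝔞 := by
    intro i x hx
    have : x ∈ (𝔞 : Set K) := by
      rw [h]; exact Set.mem_iUnion.mpr ⟨i, hx⟩
    exact this
  have key : ∀ i, ∃ M : Ideal R, M.IsMaximal ∧ 𝔟 i ≤ 𝔞 * ↑M := by
    intro i
    have hfac : 𝔟 i = 𝔞 * (𝔞⁻¹ * 𝔟 i) := by
      rw [← mul_assoc, mul_inv_cancel₀ h𝔞, one_mul]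
    have h1 : 𝔞⁻¹ * 𝔟 i ≤ 1 := by
      have h2 : 𝔞⁻¹ * 𝔟 i ≤ 𝔞⁻¹ * 𝔞 := mul_right_mono (a := 𝔞⁻¹) (hle i)
      rwa [mul_comm 𝔞⁻¹ 𝔞, mul_inv_cancel₀ h𝔞] at h2
    obtain ⟨J, hJ⟩ := le_one_iff_exists_coeIdeal.mp h1
    have hJtop : J ≠ ⊤ := by
      rintro rfl
      exact hc i (by rw [hfac, ← hJ, coeIdeal_top, mul_one])
    obtain ⟨M, hM, hJM⟩ := J.exists_le_maximal hJtop
    refine ⟨M, hM, ?_⟩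
    rw [hfac, ← hJ]
    exact mul_right_mono (a := 𝔞) ((coeIdeal_le_coeIdeal K).mpr hJM)
  choose M hMmax hMle using key
  set S : Finset (Ideal R) := Finset.univ.image M with hS
  have hSmax : ∀ m ∈ S, m.IsMaximal := by
    intro m hm
    obtain ⟨i, _, rfl⟩ := Finset.mem_image.mp hm
    exact hMmax i
  have hxS : ∀ m ∈ S, ∃ x, x ∈ 𝔞 * ↑(∏ m' ∈ S.erase m, m') ∧ x ∉ 𝔞 * (↑m : FractionalIdeal (nonZeroDivisors R) K) := by
    intro m hm
    have hmmax : m.IsMaximal := hSmax m hm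
    have hnle : ¬(𝔞 * ↑(∏ m' ∈ S.erase m, m') ≤ 𝔞 * (↑m : FractionalIdeal (nonZeroDivisors R) K)) := by
      rw [mul_le_mul_iff_right₀ (pos_iff_ne_zero.2 h𝔞), coeIdeal_le_coeIdeal]
      intro hle'
      obtain ⟨m', hm', hle''⟩ := hmmax.isPrime.prod_le.mp hle'
      exact (Finset.mem_erase.mp hm').1
        ((hSmax m' (Finset.mem_erase.mp hm').2).eq_of_le hmmax.ne_top hle'')
    exact SetLike.not_le_iff_exists.mp hnle
  choose x hx1 hx2 using hxS
  have hxa : ∀ m (hm : m ∈ S), x m hm ∈ 𝔞 := by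
    intro m hm
    have : 𝔞 * ↑(∏ m' ∈ S.erase m, m') ≤ 𝔞 * 1 := by
      exact mul_right_mono (a := 𝔞) (le_trans (coeIdeal_le_coeIdeal K |>.mpr le_top) (by rw [coeIdeal_top]))
    rw [mul_one] at this
    exact this (hx1 m hm)
  set y : K := ∑ m ∈ S.attach, x m.1 m.2 with hy
  have hya : y ∈ 𝔞 := Submodule.sum_mem _ fun m _ => hxa m.1 m.2
  have hynotin : ∀ m (hm : m ∈ S), y ∉ 𝔞 * (↑m : FractionalIdeal (nonZeroDivisors R) K) := by
    intro m hm hmem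
    apply hx2 m hm
    have hothers : ∀ m' ∈ S.attach, m'.1 ≠ m → x m'.1 m'.2 ∈ 𝔞 * (↑m : FractionalIdeal (nonZeroDivisors R) K) := by
      intro m' _ hne
      have hmem' : m ∈ S.erase m'.1 := Finset.mem_erase.mpr ⟨fun hh => hne hh.symm, hm⟩
      have hprodle : (∏ m'' ∈ S.erase m'.1, m'') ≤ m := by
        rw [← Finset.mul_prod_erase _ _ hmem']
        exact Ideal.mul_le_left
      exact mul_right_mono (a := 𝔞) ((coeIdeal_le_coeIdeal K).mpr hprodle) (hx1 m'.1 m'.2)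
    have : x m hm = y - ∑ m' ∈ S.attach.erase ⟨m, hm⟩, x m'.1 m'.2 := by
      rw [hy, ← Finset.sum_erase_add _ _ (Finset.mem_attach S ⟨m, hm⟩)]
      ring
    rw [this]
    apply Submodule.sub_mem
    · exact hmem
    · apply Submodule.sum_mem
      intro m' hm'
      exact hothers m' (Finset.mem_of_mem_erase hm') (by
        intro hh
        exact (Finset.mem_erase.mp hm').1 (Subtype.ext hh))
  obtain ⟨i, hi⟩ : ∃ i, y ∈ 𝔟 i := by
    have : y ∈ (𝔞 : Set K) := hya
    rw [h] at this
    exact Set.mem_iUnion.mp this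
  exact hynotin (M i) (Finset.mem_image.mpr ⟨i, Finset.mem_univ i, rfl⟩) (hMle i hi)
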